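/- arXiv:2112.13132 — 2 statements merged into one kernel-verified Lean document; each statement's English description precedes it below -/
import Mathlib

section
/- If A and B are symmetric positive definite n×n matrices, then ‖A^{1/2} − B^{1/2}‖₂² ≤ ‖A − B‖₂² / (λ_min(A^{1/2}) + λ_min(B^{1/2}))², where ‖·‖₂ is the spectral (operator) norm and λ_min the smallest eigenvalue. -/
open Matrix
open scoped Matrix.Norms.L2Operator
open scoped RealInnerProductSpace

variable {n : ℕ} {M : Matrix (Fin n) (Fin n) ℝ}

lemma toEuclideanLin_eigBasis (hM : M.IsHermitian) (i : Fin n) :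
    Matrix.toEuclideanLin M (hM.eigenvectorBasis i) =
      hM.eigenvalues i • hM.eigenvectorBasis i := by
  apply (WithLp.equiv 2 (Fin n → ℝ)).injective
  simp only [WithLp.equiv_apply, ofLp_toEuclideanLin_apply, WithLp.ofLp_smul]
  exact hM.mulVec_eigenvectorBasis i

lemma repr_toEuclideanLin (hM : M.IsHermitian) (x : EuclideanSpace ℝ (Fin n)) (i : Fin n) :
    hM.eigenvectorBasis.repr (Matrix.toEuclideanLin M x) i =
      hM.eigenvalues i * hM.eigenvectorBasis.repr x i := by
  have hsymm := (Matrix.isHermitian_iff_isSymmetric.1 hM)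
  rw [OrthonormalBasis.repr_apply_apply, OrthonormalBasis.repr_apply_apply,
    ← hsymm (hM.eigenvectorBasis i) x, toEuclideanLin_eigBasis hM i,
    real_inner_smul_left]

lemma inner_toEuclideanLin_eq_sum (hM : M.IsHermitian) (x : EuclideanSpace ℝ (Fin n)) :
    ⟪x, Matrix.toEuclideanLin M x⟫ =
      ∑ i, hM.eigenvalues i * (hM.eigenvectorBasis.repr x i) ^ 2 := by
  rw [← hM.eigenvectorBasis.repr.inner_map_map x (Matrix.toEuclideanLin M x)]
  rw [PiLp.inner_apply]
  refine Finset.sum_congr rfl fun i _ => ?_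
  rw [repr_toEuclideanLin hM x i]
  simp [RCLike.inner_apply]
  ring

lemma norm_sq_eq_sum_repr (b : OrthonormalBasis (Fin n) ℝ (EuclideanSpace ℝ (Fin n)))
    (x : EuclideanSpace ℝ (Fin n)) :
    ‖x‖ ^ 2 = ∑ i, (b.repr x i) ^ 2 := by
  rw [← b.repr.norm_map x, EuclideanSpace.norm_eq, Real.sq_sqrt (by positivity)]
  simp [sq_abs]

lemma norm_sq_toEuclideanLin (hM : M.IsHermitian) (x : EuclideanSpace ℝ (Fin n)) :
    ‖Matrix.toEuclideanLin M x‖ ^ 2 =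
      ∑ i, (hM.eigenvalues i) ^ 2 * (hM.eigenvectorBasis.repr x i) ^ 2 := by
  rw [norm_sq_eq_sum_repr hM.eigenvectorBasis]
  refine Finset.sum_congr rfl fun i _ => ?_
  rw [repr_toEuclideanLin hM x i]; ring

lemma opNorm_le_of_abs_eigenvalues (hM : M.IsHermitian) {C : ℝ} (hC : 0 ≤ C)
    (h : ∀ i, |hM.eigenvalues i| ≤ C) : ‖M‖ ≤ C := by
  rw [Matrix.l2_opNorm_def]
  refine ContinuousLinearMap.opNorm_le_bound _ hC fun x => ?_
  have key : ‖Matrix.toEuclideanLin M x‖ ^ 2 ≤ (C * ‖x‖) ^ 2 := by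
    rw [norm_sq_toEuclideanLin hM x, mul_pow, norm_sq_eq_sum_repr hM.eigenvectorBasis,
      Finset.mul_sum]
    refine Finset.sum_le_sum fun i _ => ?_
    have h1 : hM.eigenvalues i ^ 2 ≤ C ^ 2 := by
      rw [← sq_abs]
      exact pow_le_pow_left₀ (abs_nonneg _) (h i) 2
    exact mul_le_mul_of_nonneg_right h1 (sq_nonneg _)
  show ‖Matrix.toEuclideanLin M x‖ ≤ C * ‖x‖
  have h2 := Real.sqrt_le_sqrt key
  rwa [Real.sqrt_sq (norm_nonneg _), Real.sqrt_sq (by positivity)] at h2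


lemma toEuclideanLin_mul_apply (M N : Matrix (Fin n) (Fin n) ℝ) (x : EuclideanSpace ℝ (Fin n)) :
    Matrix.toEuclideanLin (M * N) x = Matrix.toEuclideanLin M (Matrix.toEuclideanLin N x) := by
  apply (WithLp.equiv 2 (Fin n → ℝ)).injective
  simp [ofLp_toEuclideanLin_apply, mulVec_mulVec]

lemma le_inner_toEuclideanLin (hM : M.IsHermitian) {a : ℝ}
    (ha : ∀ i, a ≤ hM.eigenvalues i) (x : EuclideanSpace ℝ (Fin n)) :
    a * ‖x‖ ^ 2 ≤ ⟪x, Matrix.toEuclideanLin M x⟫ := by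
  rw [inner_toEuclideanLin_eq_sum hM, norm_sq_eq_sum_repr hM.eigenvectorBasis, Finset.mul_sum]
  exact Finset.sum_le_sum fun i _ => mul_le_mul_of_nonneg_right (ha i) (sq_nonneg _)

/-- For symmetric positive definite matrices `A`, `B` with symmetric positive definite square
roots `S_A`, `S_B`, one has
`‖A^{1/2} - B^{1/2}‖₂² ≤ ‖A - B‖₂² / (λ_min(A^{1/2}) + λ_min(B^{1/2}))²`,
where `‖·‖₂` is the spectral norm. -/
theorem sqrt_matrix_opNorm_estimate {n : ℕ} (hn : 0 < n)
    (A B SA SB : Matrix (Fin n) (Fin n) ℝ)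
    (hA : A.PosDef) (hB : B.PosDef) (hSA : SA.PosDef) (hSB : SB.PosDef)
    (hSA2 : SA * SA = A) (hSB2 : SB * SB = B) :
    ‖SA - SB‖ ^ 2 ≤
      ‖A - B‖ ^ 2 /
        ((⨅ i, hSA.1.eigenvalues i) + ⨅ i, hSB.1.eigenvalues i) ^ 2 := by
  haveI : Nonempty (Fin n) := Fin.pos_iff_nonempty.mp hn
  set D := SA - SB with hDdef
  have hD : D.IsHermitian := hSA.1.sub hSB.1
  obtain ⟨i₀, hi₀⟩ := Finite.exists_max fun i => |hD.eigenvalues i|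
  set c := hD.eigenvalues i₀ with hc
  set v := hD.eigenvectorBasis i₀ with hvdef
  have hv1 : ‖v‖ = 1 := hD.eigenvectorBasis.orthonormal.1 i₀
  set a : ℝ := ⨅ i, hSA.1.eigenvalues i with hadef
  set b : ℝ := ⨅ i, hSB.1.eigenvalues i with hbdef
  have haL : ∀ i, a ≤ hSA.1.eigenvalues i := fun i => ciInf_le (Finite.bddBelow_range _) i
  have hbL : ∀ i, b ≤ hSB.1.eigenvalues i := fun i => ciInf_le (Finite.bddBelow_range _) i
  have hapos : 0 < a := by
    obtain ⟨j, hj⟩ := exists_eq_ciInf_of_finite (f := fun i => hSA.1.eigenvalues i)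
    rw [hadef, ← hj]; exact hSA.eigenvalues_pos j
  have hbpos : 0 < b := by
    obtain ⟨j, hj⟩ := exists_eq_ciInf_of_finite (f := fun i => hSB.1.eigenvalues i)
    rw [hbdef, ← hj]; exact hSB.eigenvalues_pos j
  have hs : 0 < a + b := by linarith
  have qa : a ≤ ⟪v, Matrix.toEuclideanLin SA v⟫ := by
    have := le_inner_toEuclideanLin hSA.1 haL v
    rwa [hv1, one_pow, mul_one] at this
  have qb : b ≤ ⟪v, Matrix.toEuclideanLin SB v⟫ := by
    have := le_inner_toEuclideanLin hSB.1 hbL v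
    rwa [hv1, one_pow, mul_one] at this
  have hTD : Matrix.toEuclideanLin D v = c • v := toEuclideanLin_eigBasis hD i₀
  have hAB : A - B = SA * D + D * SB := by
    rw [← hSA2, ← hSB2, hDdef]; noncomm_ring
  have key : ⟪v, Matrix.toEuclideanLin (A - B) v⟫ =
      c * (⟪v, Matrix.toEuclideanLin SA v⟫ + ⟪v, Matrix.toEuclideanLin SB v⟫) := by
    have hsymm := (Matrix.isHermitian_iff_isSymmetric.1 hD)
    rw [hAB, map_add, LinearMap.add_apply, inner_add_right,
      toEuclideanLin_mul_apply, toEuclideanLin_mul_apply, hTD, _root_.map_smul,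
      inner_smul_right, ← hsymm v (Matrix.toEuclideanLin SB v), hTD,
      real_inner_smul_left]
    ring
  have hub : |⟪v, Matrix.toEuclideanLin (A - B) v⟫| ≤ ‖A - B‖ := by
    have h1 := abs_real_inner_le_norm v (Matrix.toEuclideanLin (A - B) v)
    have h2 : ‖Matrix.toEuclideanLin (A - B) v‖ ≤ ‖A - B‖ * ‖v‖ := by
      rw [Matrix.l2_opNorm_def]
      exact ((Matrix.toEuclideanLin.trans LinearMap.toContinuousLinearMap) (A - B)).le_opNorm v
    rw [hv1] at h1 h2
    rw [mul_one] at h2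
    calc |⟪v, Matrix.toEuclideanLin (A - B) v⟫| ≤ 1 * ‖Matrix.toEuclideanLin (A - B) v‖ := h1
      _ = ‖Matrix.toEuclideanLin (A - B) v‖ := one_mul _
      _ ≤ ‖A - B‖ := h2
  have main : |c| * (a + b) ≤ ‖A - B‖ := by
    have h3 : a + b ≤ ⟪v, Matrix.toEuclideanLin SA v⟫ + ⟪v, Matrix.toEuclideanLin SB v⟫ :=
      add_le_add qa qb
    calc |c| * (a + b) ≤ |c| * (⟪v, Matrix.toEuclideanLin SA v⟫ +
          ⟪v, Matrix.toEuclideanLin SB v⟫) := mul_le_mul_of_nonneg_left h3 (abs_nonneg c)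
      _ ≤ |c * (⟪v, Matrix.toEuclideanLin SA v⟫ + ⟪v, Matrix.toEuclideanLin SB v⟫)| := by
          rw [abs_mul]; exact mul_le_mul_of_nonneg_left (le_abs_self _) (abs_nonneg c)
      _ = |⟪v, Matrix.toEuclideanLin (A - B) v⟫| := by rw [key]
      _ ≤ ‖A - B‖ := hub
  have hDle : ‖D‖ ≤ |c| := opNorm_le_of_abs_eigenvalues hD (abs_nonneg _) hi₀
  have final : ‖D‖ ≤ ‖A - B‖ / (a + b) := by
    rw [le_div_iff₀ hs]
    calc ‖D‖ * (a + b) ≤ |c| * (a + b) := mul_le_mul_of_nonneg_right hDle hs.le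
      _ ≤ ‖A - B‖ := main
  calc ‖D‖ ^ 2 ≤ (‖A - B‖ / (a + b)) ^ 2 := pow_le_pow_left₀ (norm_nonneg _) final 2
    _ = ‖A - B‖ ^ 2 / (a + b) ^ 2 := div_pow _ _ 2
end

section
/- Fix q ≥ 2, ε > 0, points x, x_ε ∈ ℝⁿ with x ≠ x_ε, and set Φ(y, z) := |y − z|^q/(q ε^{q−1}). Suppose symmetric n×n matrices Y, Z satisfy the block matrix inequality ((−Y, 0), (0, Z)) ≤ D²Φ(x_ε, x) + ε^{q−1} (D²Φ(x_ε, x))². Then for all ξ, η ∈ ℝⁿ: Zξ·ξ − Yη·η ≤ ε^{1−q} [ (q−1)|x_ε − x|^{q−2} + 2(q−1)² |x_ε − x|^{2(q−2)} ] |η − ξ|². -/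
open Matrix

/-- The Euclidean norm of a vector in `Fin n → ℝ`. -/
noncomputable def euclNorm {n : ℕ} (a : Fin n → ℝ) : ℝ := Real.sqrt (a ⬝ᵥ a)

/-- The Hessian of `Φ(y,z) = |y-z|^q/(q ε^{q-1})` at `(xε, x)`, as a `2n × 2n` block matrix. -/
noncomputable def hessPhi {n : ℕ} (q ε : ℝ) (xε x : Fin n → ℝ) :
    Matrix (Fin n ⊕ Fin n) (Fin n ⊕ Fin n) ℝ :=
  (ε ^ (1 - q) * euclNorm (xε - x) ^ (q - 4)) •
    ((euclNorm (xε - x) ^ (2:ℝ)) • fromBlocks 1 (-1) (-1) 1 +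
      (q - 2) • fromBlocks (vecMulVec (xε - x) (xε - x)) (-(vecMulVec (xε - x) (xε - x)))
        (-(vecMulVec (xε - x) (xε - x))) (vecMulVec (xε - x) (xε - x)))

lemma vecMulVec_mulVec' {n : ℕ} (a b c : Fin n → ℝ) :
    vecMulVec a b *ᵥ c = (b ⬝ᵥ c) • a := by
  funext i
  simp only [mulVec, vecMulVec, dotProduct, of_apply, Pi.smul_apply, smul_eq_mul,
    Finset.sum_mul]
  exact Finset.sum_congr rfl fun j _ => by ring

lemma dot_sq_le {n : ℕ} (w u : Fin n → ℝ) : (w ⬝ᵥ u)^2 ≤ (w ⬝ᵥ w) * (u ⬝ᵥ u) := by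
  simpa [dotProduct, pow_two] using
    Finset.sum_mul_sq_le_sq_mul_sq Finset.univ w u

lemma dot_self_nonneg {n : ℕ} (w : Fin n → ℝ) : 0 ≤ w ⬝ᵥ w :=
  Finset.sum_nonneg fun i _ => mul_self_nonneg _

lemma elim_dot_elim {n : ℕ} (a b c d : Fin n → ℝ) :
    Sum.elim a b ⬝ᵥ Sum.elim c d = a ⬝ᵥ c + b ⬝ᵥ d := by
  simp [dotProduct, Fintype.sum_sum_type]

noncomputable def Tmap {n : ℕ} (q ε : ℝ) (xε x : Fin n → ℝ) (d : Fin n → ℝ) : Fin n → ℝ :=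
  (ε ^ (1 - q) * euclNorm (xε - x) ^ (q - 4)) •
    ((euclNorm (xε - x) ^ (2:ℝ)) • d + ((q - 2) * ((xε - x) ⬝ᵥ d)) • (xε - x))

lemma hessPhi_mulVec {n : ℕ} (q ε : ℝ) (xε x y z : Fin n → ℝ) :
    hessPhi q ε xε x *ᵥ Sum.elim y z =
      Sum.elim (Tmap q ε xε x (y - z)) (-(Tmap q ε xε x (y - z))) := by
  simp only [hessPhi, Tmap, smul_mulVec, add_mulVec, fromBlocks_mulVec, one_mulVec,
    neg_mulVec, vecMulVec_mulVec', Sum.elim_comp_inl, Sum.elim_comp_inr]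
  funext i
  rcases i with i | i <;>
    simp [dotProduct_sub, smul_smul, mul_comm, mul_left_comm] <;> ring

/-- From the matrix inequality of the theorem on sums (maximum principle for semicontinuous
functions) applied to `Φ`, one deduces the quadratic form estimate
`Zξ·ξ - Yη·η ≤ ε^{1-q}[(q-1)|xε-x|^{q-2} + 2(q-1)²|xε-x|^{2(q-2)}]|η-ξ|²`. -/
theorem jets_quadratic_estimate {n : ℕ} (q ε : ℝ) (hq : 2 ≤ q) (hε : 0 < ε)
    (x xε : Fin n → ℝ) (hne : x ≠ xε)
    (Y Z : Matrix (Fin n) (Fin n) ℝ) (hY : Y.IsSymm) (hZ : Z.IsSymm)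
    (hblock : (hessPhi q ε xε x + ε ^ (q - 1) • (hessPhi q ε xε x * hessPhi q ε xε x) -
        fromBlocks (-Y) 0 0 Z).PosSemidef) :
    ∀ ξ η : Fin n → ℝ,
      Z *ᵥ ξ ⬝ᵥ ξ - Y *ᵥ η ⬝ᵥ η ≤
        ε ^ (1 - q) * ((q - 1) * euclNorm (xε - x) ^ (q - 2) +
          2 * (q - 1) ^ 2 * euclNorm (xε - x) ^ (2 * (q - 2))) * ((η - ξ) ⬝ᵥ (η - ξ)) := by
  intro ξ η
  set w : Fin n → ℝ := xε - x with hw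
  have hw0 : w ≠ 0 := sub_ne_zero.mpr (Ne.symm hne)
  have hγpos : 0 < w ⬝ᵥ w :=
    lt_of_le_of_ne (dot_self_nonneg w) fun h => hw0 (dotProduct_self_eq_zero.mp h.symm)
  set N : ℝ := euclNorm w with hNdef
  have hN : 0 < N := Real.sqrt_pos.mpr hγpos
  have hN2 : N ^ (2:ℝ) = w ⬝ᵥ w := by
    rw [show (2:ℝ) = ((2:ℕ):ℝ) by norm_num, Real.rpow_natCast, hNdef, euclNorm,
      sq, Real.mul_self_sqrt hγpos.le]
  set u : Fin n → ℝ := η - ξ with hu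
  set v : Fin n ⊕ Fin n → ℝ := Sum.elim η ξ with hv
  set S : ℝ := ε ^ (1 - q) * N ^ (q - 4) with hSdef
  set c : ℝ := ε ^ (q - 1) with hcdef
  have hS : 0 < S := mul_pos (Real.rpow_pos_of_pos hε _) (Real.rpow_pos_of_pos hN _)
  have hc : 0 < c := Real.rpow_pos_of_pos hε _
  set p : Fin n → ℝ := Tmap q ε xε x u with hp
  have hAv : hessPhi q ε xε x *ᵥ v = Sum.elim p (-p) := hessPhi_mulVec q ε xε x η ξ
  have hAAv : (hessPhi q ε xε x * hessPhi q ε xε x) *ᵥ v =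
      Sum.elim (Tmap q ε xε x (p + p)) (-(Tmap q ε xε x (p + p))) := by
    rw [← mulVec_mulVec, hAv, hessPhi_mulVec, sub_neg_eq_add]
  have hBv : fromBlocks (-Y) 0 0 Z *ᵥ v = Sum.elim (-(Y *ᵥ η)) (Z *ᵥ ξ) := by
    rw [hv, fromBlocks_mulVec]
    simp [neg_mulVec]
  have key := hblock.dotProduct_mulVec_nonneg v
  rw [star_trivial, sub_mulVec, add_mulVec, smul_mulVec, hAv, hAAv, hBv,
    dotProduct_sub, dotProduct_add, dotProduct_smul, hv, elim_dot_elim, elim_dot_elim,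
    elim_dot_elim, dotProduct_neg, dotProduct_neg, dotProduct_neg, smul_eq_mul] at key
  -- key : 0 ≤ η ⬝ᵥ p + -(ξ ⬝ᵥ p) + c * (η ⬝ᵥ T(p+p) + -(ξ ⬝ᵥ T(p+p))) - (-(η ⬝ᵥ Y*ᵥη) + ξ ⬝ᵥ Z*ᵥξ)
  have hTdot : ∀ u' d : Fin n → ℝ, u' ⬝ᵥ Tmap q ε xε x d =
      S * (N ^ (2:ℝ) * (u' ⬝ᵥ d) + (q - 2) * (w ⬝ᵥ d) * (u' ⬝ᵥ w)) := by
    intro u' d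
    simp only [Tmap, dotProduct_smul, dotProduct_add, smul_eq_mul, ← hw, ← hNdef, ← hSdef]
  set α : ℝ := u ⬝ᵥ u with hα
  set β : ℝ := w ⬝ᵥ u with hβdef
  set γ : ℝ := w ⬝ᵥ w with hγ
  have hcomm : u ⬝ᵥ w = β := dotProduct_comm u w
  have e1 : u ⬝ᵥ p = S * (γ * α + (q - 2) * β * β) := by
    rw [hp, hTdot, hcomm, hN2]
  have e2 : w ⬝ᵥ p = S * (γ * β + (q - 2) * β * γ) := by
    rw [hp, hTdot, hN2]
  have e3 : u ⬝ᵥ Tmap q ε xε x (p + p) =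
      S * (γ * (u ⬝ᵥ p + u ⬝ᵥ p) + (q - 2) * (w ⬝ᵥ p + w ⬝ᵥ p) * β) := by
    rw [hTdot, dotProduct_add, dotProduct_add, hcomm, hN2]
  -- reduce key to the scalar inequality
  have hup : Z *ᵥ ξ ⬝ᵥ ξ - Y *ᵥ η ⬝ᵥ η ≤ u ⬝ᵥ p + c * (u ⬝ᵥ Tmap q ε xε x (p + p)) := by
    have h1 : u ⬝ᵥ p = η ⬝ᵥ p - ξ ⬝ᵥ p := by rw [hu, sub_dotProduct]
    have h2 : u ⬝ᵥ Tmap q ε xε x (p + p) =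
        η ⬝ᵥ Tmap q ε xε x (p + p) - ξ ⬝ᵥ Tmap q ε xε x (p + p) := by
      rw [hu, sub_dotProduct]
    have h3 : Z *ᵥ ξ ⬝ᵥ ξ = ξ ⬝ᵥ (Z *ᵥ ξ) := dotProduct_comm _ _
    have h4 : Y *ᵥ η ⬝ᵥ η = η ⬝ᵥ (Y *ᵥ η) := dotProduct_comm _ _
    rw [h1, h2, h3, h4]
    linarith [key]
  have hCS : β ^ 2 ≤ γ * α := dot_sq_le w u
  have hq2 : (0:ℝ) ≤ q - 2 := by linarith
  have hαpos : 0 ≤ α := dot_self_nonneg u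
  have hdiff : 0 ≤ (S * (q - 2) + 2 * c * S ^ 2 * γ * (2 * (q - 2) + (q - 2) ^ 2)) *
      (γ * α - β ^ 2) := by
    apply mul_nonneg
    · have h5 : (0:ℝ) ≤ 2 * (q - 2) + (q - 2) ^ 2 := by positivity
      have h6 : (0:ℝ) ≤ 2 * c * S ^ 2 * γ := by positivity
      have := mul_nonneg h6 h5
      nlinarith [mul_nonneg hS.le hq2]
    · linarith
  have hbound : u ⬝ᵥ p + c * (u ⬝ᵥ Tmap q ε xε x (p + p)) ≤
      S * γ * (q - 1) * α + 2 * c * S ^ 2 * γ ^ 2 * (q - 1) ^ 2 * α := by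
    have heq : u ⬝ᵥ p + c * (u ⬝ᵥ Tmap q ε xε x (p + p)) =
        S * γ * (q - 1) * α + 2 * c * S ^ 2 * γ ^ 2 * (q - 1) ^ 2 * α -
          (S * (q - 2) + 2 * c * S ^ 2 * γ * (2 * (q - 2) + (q - 2) ^ 2)) *
            (γ * α - β ^ 2) := by
      rw [e3, e2, e1]; ring
    linarith [hdiff, heq]
  -- rpow arithmetic to identify the right-hand side
  have hsγ : S * γ = ε ^ (1 - q) * N ^ (q - 2) := by
    rw [← hN2, hSdef, mul_assoc, ← Real.rpow_add hN, show q - 4 + 2 = q - 2 by ring]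
  have hc2 : c * S ^ 2 * γ ^ 2 = ε ^ (1 - q) * N ^ (2 * (q - 2)) := by
    have rsq : ∀ (y : ℝ), 0 < y → ∀ a : ℝ, (y ^ a) ^ (2:ℕ) = y ^ (a * 2) := by
      intro y hy a
      rw [← Real.rpow_natCast (y ^ a) 2, ← Real.rpow_mul hy.le]
      norm_num
    rw [← hN2, hSdef, hcdef, mul_pow, rsq ε hε, rsq N hN, rsq N hN]
    rw [show ε ^ (q-1) * (ε ^ ((1-q)*2) * N ^ ((q-4)*2)) * N ^ ((2:ℝ)*2) =
        (ε ^ (q-1) * ε ^ ((1-q)*2)) * (N ^ ((q-4)*2) * N ^ ((2:ℝ)*2)) by ring,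
      ← Real.rpow_add hε, ← Real.rpow_add hN,
      show q - 1 + (1 - q) * 2 = 1 - q by ring, show (q - 4) * 2 + (2:ℝ) * 2 = 2 * (q - 2) by ring]
  calc Z *ᵥ ξ ⬝ᵥ ξ - Y *ᵥ η ⬝ᵥ η
      ≤ S * γ * (q - 1) * α + 2 * c * S ^ 2 * γ ^ 2 * (q - 1) ^ 2 * α :=
        le_trans hup hbound
    _ = (S * γ) * (q - 1) * α + 2 * (c * S ^ 2 * γ ^ 2) * (q - 1) ^ 2 * α := by ring
    _ = (ε ^ (1-q) * N ^ (q-2)) * (q - 1) * α +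
        2 * (ε ^ (1-q) * N ^ (2*(q-2))) * (q - 1) ^ 2 * α := by rw [hsγ, hc2]
    _ = ε ^ (1 - q) * ((q - 1) * N ^ (q - 2) +
          2 * (q - 1) ^ 2 * N ^ (2 * (q - 2))) * α := by ring
end
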